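/- Define s(n) = a(n) − b(n), where a(n) and b(n) count even and odd Motzkin paths of length n. Then s(0) = 1 and s(n+1) = s(n) − Σ_{k=0}^{n-1} s(k)·s(n-1-k) for n ≥ 0. -/

import Mathlib

inductive MStep where
  | U : MStep
  | D : MStep
  | H : MStep
deriving DecidableEq

/-- A word in {U,D,H} is a Motzkin path if #U = #D and no prefix has more D's than U's. -/
def IsMotzkin (w : List MStep) : Prop :=
  w.count MStep.U = w.count MStep.D ∧
  ∀ p : List MStep, p <+: w → p.count MStep.D ≤ p.count MStep.U

/-- Number of Motzkin paths of length n (the n-th Motzkin number). -/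
noncomputable def motzkinNum (n : ℕ) : ℕ :=
  Nat.card {w : List MStep // w.length = n ∧ IsMotzkin w}

/-- Number of Motzkin paths of length n with an even number of U steps. -/
noncomputable def evenMotzkin (n : ℕ) : ℕ :=
  Nat.card {w : List MStep // w.length = n ∧ IsMotzkin w ∧ Even (w.count MStep.U)}

/-- Number of Motzkin paths of length n with an odd number of U steps. -/
noncomputable def oddMotzkin (n : ℕ) : ℕ :=
  Nat.card {w : List MStep // w.length = n ∧ IsMotzkin w ∧ Odd (w.count MStep.U)}

/-- The shadow of the n-th Motzkin number: s(n) = a(n) - b(n). -/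
noncomputable def shadow (n : ℕ) : ℤ :=
  (evenMotzkin n : ℤ) - (oddMotzkin n : ℤ)

namespace Aux
open MStep

lemma prefix_append_cases {α} {r a b : List α} (h : r <+: a ++ b) :
    r <+: a ∨ ∃ r', r = a ++ r' ∧ r' <+: b := by
  obtain ⟨s, hs⟩ := h
  rw [List.append_eq_append_iff] at hs
  rcases hs with ⟨a', ha, _⟩ | ⟨c', hc, hs⟩
  · exact Or.inl ⟨a', ha.symm⟩
  · exact Or.inr ⟨c', hc, s, hs.symm⟩

lemma not_motzkin_D {t : List MStep} : ¬ IsMotzkin (D :: t) := by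
  rintro ⟨_, h2⟩
  have := h2 [D] ⟨t, rfl⟩
  simp at this

lemma motzkin_H_iff {t : List MStep} : IsMotzkin (H :: t) ↔ IsMotzkin t := by
  constructor
  · rintro ⟨h1, h2⟩
    refine ⟨by simpa using h1, fun p hp => ?_⟩
    have := h2 (H :: p) (by simpa using hp)
    simpa using this
  · rintro ⟨h1, h2⟩
    refine ⟨by simpa using h1, fun p hp => ?_⟩
    rcases List.prefix_cons_iff.mp hp with h | ⟨r, rfl, hr⟩
    · simp [h]
    · simpa using h2 r hr

lemma motzkin_comp {p q : List MStep} (hp : IsMotzkin p) (hq : IsMotzkin q) :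
    IsMotzkin (U :: p ++ D :: q) := by
  constructor
  · simp [List.count_append, hp.1, hq.1]; omega
  · intro r hr
    rcases List.prefix_cons_iff.mp hr with h | ⟨r', rfl, hr'⟩
    · simp [h]
    · rcases prefix_append_cases hr' with h | ⟨r2, rfl, hr2⟩
      · have := hp.2 r' h
        simp [List.count_cons]; omega
      · rcases List.prefix_cons_iff.mp hr2 with h | ⟨r3, rfl, hr3⟩
        · subst h
          have := hp.1
          simp [List.count_append, List.count_cons, this]
        · have h3 := hq.2 r3 hr3
          have := hp.1
          simp [List.count_append, List.count_cons, this]; omega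

lemma exists_return_aux : ∀ (n : ℕ) (t : List MStep), t.length ≤ n →
    t.count U + 1 ≤ t.count D → ∃ p q, t = p ++ D :: q ∧ IsMotzkin p := by
  intro n
  induction n with
  | zero =>
      intro t ht hc
      rw [Nat.le_zero, List.length_eq_zero_iff] at ht
      subst ht; simp at hc
  | succ n ih =>
      intro t ht hc
      match t with
      | [] => simp at hc
      | D :: t' => exact ⟨[], t', rfl, by simp [IsMotzkin]⟩
      | H :: t' =>
          obtain ⟨p, q, rfl, hp⟩ := ih t' (by simpa using ht) (by simpa using hc)
          exact ⟨H :: p, q, rfl, motzkin_H_iff.mpr hp⟩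
      | U :: t' =>
          have hc' : t'.count U + 2 ≤ t'.count D := by
            simp [List.count_cons] at hc; omega
          have hlt' : t'.length ≤ n := by simpa using ht
          obtain ⟨p, q, rfl, hp⟩ := ih t' hlt' (by omega)
          have hq : q.count U + 1 ≤ q.count D := by
            have := hp.1
            simp [List.count_append, List.count_cons] at hc'
            omega
          have hlq : q.length ≤ n := by
            have := hlt'; simp [List.length_append] at this; omega
          obtain ⟨p2, q2, rfl, hp2⟩ := ih q hlq hq
          exact ⟨U :: p ++ D :: p2, q2, by simp, motzkin_comp hp hp2⟩

lemma exists_return {t : List MStep} (hc : t.count U + 1 ≤ t.count D) :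
    ∃ p q, t = p ++ D :: q ∧ IsMotzkin p :=
  exists_return_aux t.length t le_rfl hc

lemma motzkin_cons_U {t : List MStep} (h : IsMotzkin (U :: t)) :
    ∃ p q, t = p ++ D :: q ∧ IsMotzkin p ∧ IsMotzkin q := by
  have hc : t.count U + 1 ≤ t.count D := by
    have := h.1; simp [List.count_cons] at this; omega
  obtain ⟨p, q, rfl, hp⟩ := exists_return hc
  refine ⟨p, q, rfl, hp, ?_, ?_⟩
  · have h1 := h.1
    have h2 := hp.1
    simp [List.count_append, List.count_cons] at h1
    omega
  · intro r hr
    obtain ⟨s, hs⟩ := hr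
    have := h.2 (U :: p ++ D :: r) ⟨s, by simp [hs]⟩
    have h1 := hp.1
    simp [List.count_append, List.count_cons] at this
    omega

lemma cancel {p p' q q' : List MStep} (hp : IsMotzkin p) (hp' : IsMotzkin p')
    (h : p ++ D :: q = p' ++ D :: q') : p = p' ∧ q = q' := by
  rw [List.append_eq_append_iff] at h
  rcases h with ⟨a, ha, hb⟩ | ⟨a, ha, hb⟩
  · match a with
    | [] => simp_all
    | x :: a' =>
        exfalso
        rw [List.cons_append, List.cons_eq_cons] at hb
        obtain ⟨rfl, _⟩ := hb
        have := hp'.2 (p ++ [D]) (by rw [ha]; exact ⟨a', by simp⟩)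
        have h1 := hp.1
        simp [List.count_append] at this
        omega
  · match a with
    | [] => simp_all
    | x :: a' =>
        exfalso
        rw [List.cons_append, List.cons_eq_cons] at hb
        obtain ⟨rfl, _⟩ := hb
        have := hp.2 (p' ++ [D]) (by rw [ha]; exact ⟨a', by simp⟩)
        have h1 := hp'.1
        simp [List.count_append] at this
        omega


instance : Fintype MStep :=
  ⟨{U, D, H}, by intro x; cases x <;> simp⟩

instance decIsMotzkin : DecidablePred IsMotzkin := fun w =>
  decidable_of_iff (w.count U = w.count D ∧ ∀ p ∈ w.inits, p.count D ≤ p.count U)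
    (by simp [IsMotzkin, List.mem_inits])

def allW : ℕ → Finset (List MStep)
  | 0 => {[]}
  | n + 1 => (Finset.univ ×ˢ allW n).image (fun aw => aw.1 :: aw.2)

lemma mem_allW {n : ℕ} {w : List MStep} : w ∈ allW n ↔ w.length = n := by
  induction n generalizing w with
  | zero => simp [allW, List.length_eq_zero_iff]
  | succ n ih =>
      cases w with
      | nil => simp [allW]
      | cons a t => simp [allW, ih]

def M (n : ℕ) : Finset (List MStep) := (allW n).filter IsMotzkin

lemma mem_M {n : ℕ} {w : List MStep} : w ∈ M n ↔ w.length = n ∧ IsMotzkin w := by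
  simp [M, mem_allW]

lemma nat_card_eq (p : List MStep → Prop) [DecidablePred p] (n : ℕ) :
    Nat.card {w : List MStep // w.length = n ∧ p w} = ((allW n).filter p).card := by
  have h1 : Nat.card {w : List MStep // w.length = n ∧ p w}
      = Set.ncard {w : List MStep | w.length = n ∧ p w} :=
    Nat.card_coe_set_eq _
  rw [h1]
  have h2 : {w : List MStep | w.length = n ∧ p w} = ↑((allW n).filter p) := by
    ext w; simp [mem_allW]
  rw [h2, Set.ncard_coe_finset]

noncomputable def sgn (w : List MStep) : ℤ := (-1) ^ (w.count U)


lemma shadow_eq (n : ℕ) : shadow n = ∑ w ∈ M n, sgn w := by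
  have he : (evenMotzkin n : ℤ) = (((M n).filter (fun w => Even (w.count U))).card : ℤ) := by
    rw [evenMotzkin, nat_card_eq (fun w => IsMotzkin w ∧ Even (w.count U)) n]
    congr 2
    rw [M, Finset.filter_filter]
  have ho : (oddMotzkin n : ℤ) = (((M n).filter (fun w => ¬ Even (w.count U))).card : ℤ) := by
    rw [oddMotzkin, nat_card_eq (fun w => IsMotzkin w ∧ Odd (w.count U)) n]
    congr 2
    rw [M, Finset.filter_filter]
    apply Finset.filter_congr
    intro w _
    exact and_congr_right fun _ => Nat.not_even_iff_odd.symm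
  have h1 : ∑ w ∈ (M n).filter (fun w => Even (w.count U)), sgn w
      = (((M n).filter (fun w => Even (w.count U))).card : ℤ) := by
    have hc : ∀ w ∈ (M n).filter (fun w => Even (w.count U)), sgn w = 1 :=
      fun w hw => show sgn w = 1 from (Finset.mem_filter.mp hw).2.neg_one_pow
    rw [Finset.sum_congr rfl hc, Finset.sum_const, nsmul_eq_mul, mul_one]
  have h2 : ∑ w ∈ (M n).filter (fun w => ¬ Even (w.count U)), sgn w
      = -(((M n).filter (fun w => ¬ Even (w.count U))).card : ℤ) := by
    have hc : ∀ w ∈ (M n).filter (fun w => ¬ Even (w.count U)), sgn w = -1 :=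
      fun w hw => show sgn w = -1 from
        (Nat.not_even_iff_odd.mp (Finset.mem_filter.mp hw).2).neg_one_pow
    rw [Finset.sum_congr rfl hc, Finset.sum_const, nsmul_eq_mul, mul_neg_one]
  rw [shadow, he, ho, ← Finset.sum_filter_add_sum_filter_not (M n)
    (fun w => Even (w.count U)) sgn, h1, h2]
  try ring

lemma sgn_H (t : List MStep) : sgn (H :: t) = sgn t := by
  simp [sgn, List.count_cons]

lemma sgn_comp (p q : List MStep) : sgn (U :: p ++ D :: q) = -(sgn p * sgn q) := by
  simp [sgn, List.count_append, List.count_cons, pow_add, pow_succ]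
  try ring

lemma M_succ (n : ℕ) :
    M (n + 1) = (M n).image (fun w => H :: w) ∪
      (Finset.range n).biUnion (fun k =>
        ((M k) ×ˢ (M (n - 1 - k))).image (fun pq => U :: pq.1 ++ D :: pq.2)) := by
  ext w
  simp only [Finset.mem_union, Finset.mem_image, Finset.mem_biUnion, Finset.mem_range,
    Finset.mem_product, mem_M, Prod.exists]
  constructor
  · rintro ⟨hlen, hm⟩
    match w with
    | [] => simp at hlen
    | D :: t => exact absurd hm not_motzkin_D
    | H :: t => exact Or.inl ⟨t, ⟨by simpa using hlen, motzkin_H_iff.mp hm⟩, rfl⟩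
    | U :: t =>
        obtain ⟨p, q, rfl, hp, hq⟩ := motzkin_cons_U hm
        have hlen' : p.length + q.length + 2 = n + 1 := by
          simp [List.length_append] at hlen; omega
        exact Or.inr ⟨p.length, by omega, p, q, ⟨⟨rfl, hp⟩, ⟨by omega, hq⟩⟩, by simp⟩
  · rintro (⟨t, ⟨hl, hm⟩, rfl⟩ | ⟨k, hk, p, q, ⟨⟨hpl, hp⟩, hql, hq⟩, rfl⟩)
    · exact ⟨by simp [hl], motzkin_H_iff.mpr hm⟩
    · refine ⟨?_, motzkin_comp hp hq⟩
      simp only [List.length_cons, List.length_append, hpl, hql]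
      omega

lemma sum_sgn_succ (n : ℕ) :
    ∑ w ∈ M (n + 1), sgn w
      = (∑ w ∈ M n, sgn w)
        - ∑ k ∈ Finset.range n, (∑ p ∈ M k, sgn p) * (∑ q ∈ M (n - 1 - k), sgn q) := by
  rw [M_succ]
  rw [Finset.sum_union ?hdisj]
  case hdisj =>
    rw [Finset.disjoint_left]
    rintro w hw hw'
    simp only [Finset.mem_image] at hw
    simp only [Finset.mem_biUnion, Finset.mem_image] at hw'
    obtain ⟨t, _, rfl⟩ := hw
    obtain ⟨k, _, pq, _, heq⟩ := hw'
    simp at heq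
  rw [Finset.sum_image (by intro x _ y _ h; simpa using h)]
  rw [Finset.sum_biUnion ?hpd]
  case hpd =>
    intro k hk k' hk' hkk'
    simp only [Finset.mem_coe, Finset.mem_range] at hk hk'
    rw [Function.onFun, Finset.disjoint_left]
    rintro w hw hw'
    simp only [Finset.mem_image, Finset.mem_product, mem_M, Prod.exists] at hw hw'
    obtain ⟨p, q, ⟨⟨hpl, hp⟩, _⟩, rfl⟩ := hw
    obtain ⟨p', q', ⟨⟨hpl', hp'⟩, _⟩, heq⟩ := hw'
    simp only [List.cons_append, List.cons.injEq, true_and] at heq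
    obtain ⟨p2, _⟩ := cancel hp' hp heq
    exact hkk' (by rw [← hpl, ← hpl', p2])
  have hterm : ∀ k ∈ Finset.range n,
      (∑ pq ∈ (M k) ×ˢ (M (n - 1 - k)), sgn (U :: pq.1 ++ D :: pq.2))
        = -((∑ p ∈ M k, sgn p) * (∑ q ∈ M (n - 1 - k), sgn q)) := by
    intro k _
    rw [Finset.sum_mul_sum, ← Finset.sum_product', ← Finset.sum_neg_distrib]
    apply Finset.sum_congr rfl
    intro pq _
    exact sgn_comp pq.1 pq.2
  have himg : ∀ k ∈ Finset.range n,
      (∑ w ∈ ((M k) ×ˢ (M (n - 1 - k))).image (fun pq => U :: pq.1 ++ D :: pq.2), sgn w)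
        = ∑ pq ∈ (M k) ×ˢ (M (n - 1 - k)), sgn (U :: pq.1 ++ D :: pq.2) := by
    intro k _
    apply Finset.sum_image
    rintro ⟨p, q⟩ hpq ⟨p', q'⟩ hpq' h
    simp only [Finset.mem_coe, Finset.mem_product, mem_M] at hpq hpq'
    simp only [List.cons_append, List.cons.injEq, true_and] at h
    obtain ⟨h1, h2⟩ := cancel hpq.1.2 hpq'.1.2 h
    simp [h1, h2]
  rw [Finset.sum_congr rfl himg, Finset.sum_congr rfl hterm,
    Finset.sum_neg_distrib]
  have hH : ∑ w ∈ M n, sgn (H :: w) = ∑ w ∈ M n, sgn w :=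
    Finset.sum_congr rfl (fun w _ => sgn_H w)
  rw [hH]
  ring

end Aux

theorem stmt_10 :
    shadow 0 = 1 ∧
    ∀ n : ℕ, shadow (n + 1) = shadow n - ∑ k ∈ Finset.range n, shadow k * shadow (n - 1 - k) := by
  constructor
  · rw [Aux.shadow_eq]
    have h0 : Aux.M 0 = {[]} := by
      ext w
      simp only [Aux.mem_M, List.length_eq_zero_iff, Finset.mem_singleton]
      constructor
      · rintro ⟨rfl, _⟩; rfl
      · rintro rfl
        exact ⟨rfl, ⟨rfl, fun p hp => by simp [List.prefix_nil.mp hp]⟩⟩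
    rw [h0]
    simp [Aux.sgn]
  · intro n
    rw [Aux.shadow_eq (n + 1), Aux.sum_sgn_succ]
    simp only [← Aux.shadow_eq]
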